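/- Assume Hypothesis (HA). If β₁, β₂ ∈ ℝ are such that λ e^{iβ₁} ∈ σ_per(P) and λ e^{iβ₂} ∈ σ_per(P), then λ e^{i(β₁+β₂)} ∈ σ_per(P); i.e. the set of phases of peripheral point eigenvalues of P is closed under addition. -/

import Mathlib

open MeasureTheory ProbabilityTheory Filter Topology

namespace QEM

noncomputable section

variable {M : Type*} [MetricSpace M] [CompactSpace M] [MeasurableSpace M] [BorelSpace M]

/-- The weighted Koopman operator on real-valued functions:
`P f (x) = e^{φ(x)} ∫ f(y) κ(x,dy)`. -/
def PR (φ : M → ℝ) (κ : Kernel M M) (f : M → ℝ) : M → ℝ :=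
  fun x => Real.exp (φ x) * ∫ y, f y ∂(κ x)

/-- The weighted Koopman operator on complex-valued functions
(`P f := P(Re f) + i P(Im f)`, equivalently with the complex Bochner integral). -/
def PC (φ : M → ℝ) (κ : Kernel M M) (f : M → ℂ) : M → ℂ :=
  fun x => (Real.exp (φ x) : ℂ) * ∫ y, f y ∂(κ x)

/-- Bounded measurable real-valued functions. -/
def BddMeas (f : M → ℝ) : Prop := Measurable f ∧ ∃ C : ℝ, ∀ x, |f x| ≤ C

/-- Bounded measurable complex-valued functions. -/
def BddMeasC (f : M → ℂ) : Prop := Measurable f ∧ ∃ C : ℝ, ∀ x, ‖f x‖ ≤ C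

/-- The operator `P_g f := P (1_{g>0} · f)`. -/
def Pg (φ : M → ℝ) (κ : Kernel M M) (g : M → ℝ) : (M → ℝ) → (M → ℝ) :=
  fun f => PR φ κ (Set.indicator {x | 0 < g x} f)

/-- Complex version of `P_g`. -/
def PgC (φ : M → ℝ) (κ : Kernel M M) (g : M → ℝ) : (M → ℂ) → (M → ℂ) :=
  fun f => PC φ κ (Set.indicator {x | 0 < g x} f)

/-- The indicator function of `{g > 0}`. -/
def oneG (g : M → ℝ) : M → ℝ := Set.indicator {x | 0 < g x} (fun _ => (1 : ℝ))

/-- The normalized restriction `μ̃` of `μ` to `{g > 0}`, i.e.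
`μ̃(A) = μ(A ∩ {g>0}) / μ({g>0})`. -/
def mtilde (μ : Measure M) (g : M → ℝ) : Measure M :=
  (μ {x | 0 < g x})⁻¹ • μ.restrict {x | 0 < g x}

/-- The root-of-unity phase `e^{2πi j/k}`. -/
def rootU (k j : ℕ) : ℂ := Complex.exp (2 * (Real.pi : ℂ) * Complex.I * (j : ℂ) / (k : ℂ))

/-- Basic standing setup: `μ` is a fully supported Borel probability measure, `κ` a
sub-Markov kernel with `κ(x,·) ≪ μ` for all `x`, and `φ` a (bounded) continuous function. -/
structure Setup (μ : Measure M) (κ : Kernel M M) (φ : M → ℝ) : Prop where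
  prob : IsProbabilityMeasure μ
  fullSupp : ∀ U : Set M, IsOpen U → U.Nonempty → 0 < μ U
  subMarkov : ∀ x, κ x Set.univ ≤ 1
  ac : ∀ x, κ x ≪ μ
  contφ : Continuous φ

/-- Hypothesis (HA): (i) `P` is strong Feller; (ii) `lam > 0` equals the spectral radius of the
induced operator `T` on `L^∞(M,μ;ℂ)` (where `T` agrees a.e. with the pointwise operator `P` on
bounded measurable representatives); (iii) the eigenspace of `P` at `lam` in `L^∞(M,μ)` is
one-dimensional, spanned by a continuous nonnegative `g ≢ 0` with `P g = lam·g` and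
`∫ g dμ = μ {g>0}`; (iv) `P^*μ = lam·μ`. -/
structure HypHA (μ : Measure M) (κ : Kernel M M) (φ : M → ℝ)
    (T : Lp ℂ ⊤ μ →L[ℂ] Lp ℂ ⊤ μ) (lam : ℝ) (g : M → ℝ) : Prop where
  setup : Setup μ κ φ
  strongFeller : ∀ f : M → ℝ, BddMeas f → Continuous (PR φ κ f)
  lam_pos : 0 < lam
  Tcompat : ∀ f : M → ℂ, BddMeasC f → ∀ F : Lp ℂ ⊤ μ, ⇑F =ᵐ[μ] f →
      ⇑(T F) =ᵐ[μ] PC φ κ f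
  specRad : spectralRadius ℂ T = ENNReal.ofReal lam
  g_cont : Continuous g
  g_nonneg : ∀ x, 0 ≤ g x
  g_ne : g ≠ 0
  g_eigen : PR φ κ g = fun x => lam * g x
  g_int : ∫ x, g x ∂μ = (μ {x | 0 < g x}).toReal
  eigen_dim : ∀ f : M → ℝ, BddMeas f → PR φ κ f =ᵐ[μ] (fun x => lam * f x) →
      ∃ c : ℝ, f =ᵐ[μ] fun x => c * g x
  Pstar : ∀ f : M → ℝ, BddMeas f → ∫ x, PR φ κ f x ∂μ = lam * ∫ x, f x ∂μ

/-- Membership in the point peripheral spectrum `σ_per(P)`: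
`|α| = lam` and `P f = α f` for some nonzero `f ∈ L^∞(M,μ;ℂ)`. -/
def PerSpec (μ : Measure M) (κ : Kernel M M) (φ : M → ℝ) (lam : ℝ) (α : ℂ) : Prop :=
  ‖α‖ = lam ∧ ∃ f : M → ℂ, BddMeasC f ∧ ¬ (f =ᵐ[μ] 0) ∧ PC φ κ f =ᵐ[μ] fun x => α * f x

/-- `σ_per(P) = {lam·e^{2πi j/k} : j = 0, …, k-1}`. -/
def PerSpecEq (μ : Measure M) (κ : Kernel M M) (φ : M → ℝ) (lam : ℝ) (k : ℕ) : Prop :=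
  ∀ α : ℂ, PerSpec μ κ φ lam α ↔ ∃ j : ℕ, j < k ∧ α = (lam : ℂ) * rootU k j

/-- A family of `k` linearly independent, nonnegative, continuous functions with pairwise
disjoint supports, spanning `ker(P^k - lam^k)` in `L^∞(M,μ;ℂ)`, each of integral `μ {g>0}`. -/
structure PreFamily (μ : Measure M) (κ : Kernel M M) (φ : M → ℝ) (lam : ℝ) (g : M → ℝ)
    (k : ℕ) (gi : Fin k → M → ℝ) : Prop where
  cont : ∀ i, Continuous (gi i)
  nonneg : ∀ i x, 0 ≤ gi i x
  indep : LinearIndependent ℝ gi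
  span_ker : ∀ f : M → ℂ, BddMeasC f →
      (((PC φ κ)^[k] f) =ᵐ[μ] fun x => (lam : ℂ) ^ k * f x) ↔
        ∃ c : Fin k → ℂ, f =ᵐ[μ] fun x => ∑ i, c i * (gi i x : ℂ)
  integral : ∀ i, ∫ x, gi i x ∂μ = (μ {x | 0 < g x}).toReal
  disj : ∀ i j, i ≠ j → ∀ x, ¬ (0 < gi i x ∧ 0 < gi j x)

/-- The cyclic family hypothesis: nonnegative continuous `g_0, …, g_{k-1}` supported in `{g>0}`
with pairwise disjoint supports, spanning `ker(P^k - lam^k)` in `L^∞(M,μ;ℂ)`, with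
`∫ g_i dμ = μ {g>0}`, `P g_i = lam·g_{i-1 (mod k)}` and `g = (1/k) ∑ g_i`. -/
structure CyclicFamily (μ : Measure M) (κ : Kernel M M) (φ : M → ℝ) (lam : ℝ) (g : M → ℝ)
    (k : ℕ) [NeZero k] (gi : Fin k → M → ℝ) : Prop where
  cont : ∀ i, Continuous (gi i)
  nonneg : ∀ i x, 0 ≤ gi i x
  supported : ∀ i x, 0 < gi i x → 0 < g x
  disj : ∀ i j, i ≠ j → ∀ x, ¬ (0 < gi i x ∧ 0 < gi j x)
  span_ker : ∀ f : M → ℂ, BddMeasC f →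
      (((PC φ κ)^[k] f) =ᵐ[μ] fun x => (lam : ℂ) ^ k * f x) ↔
        ∃ c : Fin k → ℂ, f =ᵐ[μ] fun x => ∑ i, c i * (gi i x : ℂ)
  integral : ∀ i, ∫ x, gi i x ∂μ = (μ {x | 0 < g x}).toReal
  cycle : ∀ i : Fin k, PR φ κ (gi i) = fun x => lam * gi (i - 1) x
  avg : g = fun x => (1 / (k : ℝ)) * ∑ i, gi i x

/-- The spectral decomposition hypothesis: a closed `P_g`-invariant subspace `V` of
`L^∞({g>0},μ;ℂ)` with `L^∞({g>0},μ;ℂ) = span{g_0,…,g_{k-1}} ⊕ V` and such that the spectral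
radius of `P_g` restricted to `V` is `< lam` (expressed through a geometric bound on the
iterates, via Gelfand's formula). -/
structure SpecDecomp (μ : Measure M) (κ : Kernel M M) (φ : M → ℝ) (lam : ℝ) (g : M → ℝ)
    (k : ℕ) (gi : Fin k → M → ℝ) (V : Submodule ℂ (M → ℂ)) : Prop where
  meas : ∀ v ∈ V, Measurable v
  bdd : ∀ v ∈ V, ∃ C : ℝ, ∀ x, ‖v x‖ ≤ C
  supp : ∀ v ∈ V, ∀ x, ¬ 0 < g x → v x = 0
  invariant : ∀ v ∈ V, PgC φ κ g v ∈ V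
  closed : ∀ (u : ℕ → M → ℂ) (f : M → ℂ), (∀ n, u n ∈ V) → Measurable f →
      (∃ C : ℝ, ∀ x, ‖f x‖ ≤ C) → (∀ x, ¬ 0 < g x → f x = 0) →
      Tendsto (fun n => eLpNorm (u n - f) ⊤ μ) atTop (nhds 0) → f ∈ V
  decomp : ∀ f : M → ℂ, BddMeasC f → (∀ x, ¬ 0 < g x → f x = 0) →
      ∃ c : Fin k → ℂ, ∃ v ∈ V, f = fun x => (∑ i, c i * (gi i x : ℂ)) + v x
  unique : ∀ c : Fin k → ℂ, (fun x => ∑ i, c i * (gi i x : ℂ)) ∈ V → c = 0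
  gap : ∃ r : ℝ, 0 ≤ r ∧ r < lam ∧ ∃ C : ℝ, ∀ n : ℕ, ∀ v ∈ V,
      eLpNorm ((PgC φ κ g)^[n] v) ⊤ μ ≤ ENNReal.ofReal (C * r ^ n) * eLpNorm v ⊤ μ

/-- The operator `P^{k+1} - lam^{k+1}` on complex-valued functions. -/
def Qop (φ : M → ℝ) (κ : Kernel M M) (lam : ℝ) (k : ℕ) : (M → ℂ) → (M → ℂ) :=
  fun h x => (PC φ κ)^[k + 1] h x - (lam : ℂ) ^ (k + 1) * h x


private lemma re_eq_norm_imp' (z : ℂ) (h : z.re = ‖z‖) : z = (‖z‖ : ℂ) := by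
  have him : z.im = 0 := by
    have h2 := Complex.sq_norm z
    rw [Complex.normSq_apply] at h2
    nlinarith [norm_nonneg z]
  rw [← h]; exact (Complex.ext (by simp) (by simp [him])).symm

private lemma integrable_of_bdd' {E : Type*} [NormedAddCommGroup E] [MeasurableSpace E]
    [BorelSpace E] [SecondCountableTopology E] {ν : Measure M} [IsFiniteMeasure ν] {f : M → E}
    (hm : Measurable f) {C : ℝ} (hb : ∀ x, ‖f x‖ ≤ C) : Integrable f ν :=
  (integrable_const C).mono' hm.aestronglyMeasurable (Filter.Eventually.of_forall hb)

private lemma eq_case' {ν : Measure M} [IsFiniteMeasure ν] {F : M → ℂ}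
    (hF : Integrable F ν) (h : ‖∫ y, F y ∂ν‖ = ∫ y, ‖F y‖ ∂ν) :
    ∃ u : ℂ, ‖u‖ = 1 ∧ ∀ᵐ y ∂ν, F y = u * ‖F y‖ := by
  set I := ∫ y, F y ∂ν with hI
  by_cases hI0 : I = 0
  · refine ⟨1, by simp, ?_⟩
    have hz : ∫ y, ‖F y‖ ∂ν = 0 := by rw [← h, hI0, norm_zero]
    have h0 : (fun y => ‖F y‖) =ᵐ[ν] 0 :=
      (integral_eq_zero_iff_of_nonneg_ae
        (Filter.Eventually.of_forall fun y => norm_nonneg _) hF.norm).mp hz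
    filter_upwards [h0] with y hy
    simp only [Pi.zero_apply] at hy
    simp [norm_eq_zero.mp hy]
  · set u : ℂ := I / ‖I‖ with hu
    have hIn : (0:ℝ) < ‖I‖ := norm_pos_iff.mpr hI0
    have hun : ‖u‖ = 1 := by
      rw [hu, norm_div]
      simp only [Complex.norm_real, Real.norm_eq_abs, abs_norm]
      exact div_self hIn.ne'
    refine ⟨u, hun, ?_⟩
    have hre : ∀ z : ℂ, ((starRingEnd ℂ) u * z).re ≤ ‖z‖ := by
      intro z
      calc ((starRingEnd ℂ) u * z).re ≤ ‖(starRingEnd ℂ) u * z‖ := Complex.re_le_norm _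
        _ = ‖u‖ * ‖z‖ := by rw [norm_mul, RingHomIsometric.norm_map]
        _ = ‖z‖ := by rw [hun, one_mul]
    have hint : Integrable (fun y => ((starRingEnd ℂ) u * F y).re) ν :=
      (hF.const_mul _).re
    have hieq : ∫ y, ((starRingEnd ℂ) u * F y).re ∂ν = ∫ y, ‖F y‖ ∂ν := by
      have h5 : ∫ y, ((starRingEnd ℂ) u * F y).re ∂ν
          = (∫ y, (starRingEnd ℂ) u * F y ∂ν).re := integral_re (hF.const_mul _)
      rw [h5, integral_const_mul, ← h]
      have : (starRingEnd ℂ) u * I = (‖I‖ : ℂ) := by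
        rw [hu, map_div₀, Complex.conj_ofReal, div_mul_eq_mul_div,
          ← Complex.normSq_eq_conj_mul_self, Complex.normSq_eq_norm_sq]
        have hne : ((‖I‖ : ℝ) : ℂ) ≠ 0 := by
          exact_mod_cast hIn.ne'
        rw [sq]
        push_cast
        rw [mul_div_assoc, div_self hne, mul_one]
      rw [this, Complex.ofReal_re]
    have hG0 : (fun y => ‖F y‖ - ((starRingEnd ℂ) u * F y).re) =ᵐ[ν] 0 := by
      refine (integral_eq_zero_iff_of_nonneg_ae
        (Filter.Eventually.of_forall fun y => sub_nonneg.mpr (hre _)) (hF.norm.sub hint)).mp ?_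
      rw [integral_sub hF.norm hint, hieq, sub_self]
    filter_upwards [hG0] with y hy
    simp only [Pi.zero_apply] at hy
    have h3 : ‖(starRingEnd ℂ) u * F y‖ = ‖F y‖ := by
      rw [norm_mul, RingHomIsometric.norm_map, hun, one_mul]
    have h1 : ((starRingEnd ℂ) u * F y).re = ‖(starRingEnd ℂ) u * F y‖ := by
      rw [h3]; linarith
    have h2 := re_eq_norm_imp' _ h1
    rw [h3] at h2
    have h4 : u * ((starRingEnd ℂ) u * F y) = u * (‖F y‖ : ℂ) := by rw [h2]
    rwa [← mul_assoc, Complex.mul_conj, Complex.normSq_eq_norm_sq,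
      hun, one_pow, Complex.ofReal_one, one_mul] at h4

private lemma exists_normalized {μ : Measure M} {κ : Kernel M M} {φ : M → ℝ}
    {T : Lp ℂ ⊤ μ →L[ℂ] Lp ℂ ⊤ μ} {lam : ℝ} {g : M → ℝ}
    (hHA : HypHA μ κ φ T lam g)
    {α : ℂ} {f : M → ℂ} (hf : BddMeasC f) (hne : ¬ f =ᵐ[μ] 0)
    (heig : PC φ κ f =ᵐ[μ] fun x => α * f x) (hα : ‖α‖ = lam) :
    ∃ h : M → ℂ, Measurable h ∧ (∀ x, ‖h x‖ = g x) ∧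
      PC φ κ h =ᵐ[μ] fun x => α * h x := by
  obtain ⟨hfm, C, hfC⟩ := hf
  haveI : IsProbabilityMeasure μ := hHA.setup.prob
  set F : M → ℝ := fun x => ‖f x‖ with hFdef
  have hFbm : BddMeas F :=
    ⟨hfm.norm, C, fun x => by simpa [hFdef, abs_of_nonneg (norm_nonneg _)] using hfC x⟩
  have hpt : ∀ x, ‖PC φ κ f x‖ ≤ PR φ κ F x := by
    intro x
    simp only [PC, PR, hFdef]
    rw [norm_mul, Complex.norm_real, Real.norm_eq_abs, abs_of_pos (Real.exp_pos _)]
    exact mul_le_mul_of_nonneg_left (norm_integral_le_integral_norm f) (Real.exp_pos _).le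
  have hae1 : ∀ᵐ x ∂μ, lam * F x ≤ PR φ κ F x := by
    filter_upwards [heig] with x hx
    have h1 : ‖PC φ κ f x‖ = lam * F x := by rw [hx, norm_mul, hα]
    rw [← h1]; exact hpt x
  have hFint : Integrable F μ := integrable_of_bdd' hFbm.1
    (fun x => by simpa [Real.norm_eq_abs] using hFbm.2.choose_spec x)
  have hPRcont : Continuous (PR φ κ F) := hHA.strongFeller F hFbm
  have hPRint : Integrable (PR φ κ F) μ :=
    hPRcont.integrable_of_hasCompactSupport (HasCompactSupport.of_compactSpace _)
  have hsub : ∫ x, (PR φ κ F x - lam * F x) ∂μ = 0 := by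
    rw [integral_sub hPRint (hFint.const_mul lam), hHA.Pstar F hFbm, integral_const_mul, sub_self]
  have haez : (fun x => PR φ κ F x - lam * F x) =ᵐ[μ] 0 := by
    refine (integral_eq_zero_iff_of_nonneg_ae ?_ (hPRint.sub (hFint.const_mul lam))).mp hsub
    filter_upwards [hae1] with x hx
    simpa using sub_nonneg.mpr hx
  have heigF : PR φ κ F =ᵐ[μ] fun x => lam * F x := by
    filter_upwards [haez] with x hx
    simp only [Pi.zero_apply] at hx
    linarith [sub_eq_zero.mp hx]
  obtain ⟨c, hc⟩ := hHA.eigen_dim F hFbm heigF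
  have hcpos : 0 < c := by
    by_contra hle
    push_neg at hle
    apply hne
    filter_upwards [hc] with x hx
    have h1 : F x ≤ 0 := by
      rw [hx]; exact mul_nonpos_of_nonpos_of_nonneg hle (hHA.g_nonneg x)
    have h2 : F x = 0 := le_antisymm h1 (norm_nonneg _)
    simpa using norm_eq_zero.mp h2
  set f' : M → ℂ := fun x => (c:ℂ)⁻¹ * f x with hf'def
  have hf'm : Measurable f' := hfm.const_mul _
  have heig' : ∀ᵐ x ∂μ, PC φ κ f' x = α * f' x := by
    filter_upwards [heig] with x hx
    have h1 : PC φ κ f' x = (c:ℂ)⁻¹ * PC φ κ f x := by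
      simp only [PC, hf'def]
      rw [integral_const_mul]
      ring
    rw [h1, hx]; simp only [hf'def]; ring
  have hnorm' : ∀ᵐ x ∂μ, ‖f' x‖ = g x := by
    filter_upwards [hc] with x hx
    simp only [hf'def]
    rw [norm_mul, norm_inv, Complex.norm_real, Real.norm_eq_abs, abs_of_pos hcpos]
    rw [hFdef] at hx
    simp only at hx
    rw [hx]
    field_simp
  set h : M → ℂ := fun x => if ‖f' x‖ = g x then f' x else (g x : ℂ) with hhdef
  have hgm : Measurable g := hHA.g_cont.measurable
  have hhm : Measurable h :=
    Measurable.ite (measurableSet_eq_fun hf'm.norm hgm) hf'm (Complex.measurable_ofReal.comp hgm)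
  have hhn : ∀ x, ‖h x‖ = g x := by
    intro x
    by_cases hx : ‖f' x‖ = g x
    · simp only [hhdef, if_pos hx]; exact hx
    · simp only [hhdef, if_neg hx]
      rw [Complex.norm_real, Real.norm_eq_abs, abs_of_nonneg (hHA.g_nonneg x)]
  have hhf' : h =ᵐ[μ] f' := by
    filter_upwards [hnorm'] with x hx
    simp only [hhdef, if_pos hx]
  have hPChf : ∀ x, PC φ κ h x = PC φ κ f' x := by
    intro x
    simp only [PC]
    congr 1
    exact integral_congr_ae (hhf'.filter_mono (hHA.setup.ac x).ae_le)
  refine ⟨h, hhm, hhn, ?_⟩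
  filter_upwards [heig', hhf'] with x h1 h2
  rw [hPChf x, h1, h2]

/-- **Step 2 of Lemma A.2.** Under Hypothesis (HA), the set of phases of
peripheral point eigenvalues of `P` is closed under addition. -/
theorem statement13 (μ : Measure M) (κ : Kernel M M) (φ : M → ℝ)
    (T : Lp ℂ ⊤ μ →L[ℂ] Lp ℂ ⊤ μ) (lam : ℝ) (g : M → ℝ)
    (hHA : HypHA μ κ φ T lam g)
    (β₁ β₂ : ℝ)
    (h1 : PerSpec μ κ φ lam ((lam : ℂ) * Complex.exp (Complex.I * (β₁ : ℂ))))
    (h2 : PerSpec μ κ φ lam ((lam : ℂ) * Complex.exp (Complex.I * (β₂ : ℂ)))) :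
    PerSpec μ κ φ lam ((lam : ℂ) * Complex.exp (Complex.I * ((β₁ : ℂ) + (β₂ : ℂ)))) := by
  haveI : IsProbabilityMeasure μ := hHA.setup.prob
  obtain ⟨hα₁, f₁, hf₁, hne₁, heig₁⟩ := h1
  obtain ⟨hα₂, f₂, hf₂, hne₂, heig₂⟩ := h2
  have hfin : ∀ x, IsFiniteMeasure (κ x) :=
    fun x => ⟨lt_of_le_of_lt (hHA.setup.subMarkov x) ENNReal.one_lt_top⟩
  -- positivity of μ {g > 0}
  have hgne : ∃ x, g x ≠ 0 := by
    by_contra hy; push_neg at hy; exact hHA.g_ne (funext fun x => hy x)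
  obtain ⟨x₀, hx₀⟩ := hgne
  haveI : Nonempty M := ⟨x₀⟩
  have hμg : 0 < μ {x | 0 < g x} :=
    hHA.setup.fullSupp _ (isOpen_lt continuous_const hHA.g_cont)
      ⟨x₀, lt_of_le_of_ne (hHA.g_nonneg x₀) (Ne.symm hx₀)⟩
  -- a maximum of g
  obtain ⟨x₁, hx₁⟩ := isCompact_univ.exists_isMaxOn Set.univ_nonempty hHA.g_cont.continuousOn
  have hgmax : ∀ x, g x ≤ g x₁ := fun x => hx₁.2 (Set.mem_univ x)
  -- normalize eigenfunctions
  obtain ⟨h₁, hm₁, hn₁, he₁⟩ := exists_normalized hHA hf₁ hne₁ heig₁ hα₁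
  obtain ⟨h₂, hm₂, hn₂, he₂⟩ := exists_normalized hHA hf₂ hne₂ heig₂ hα₂
  set α₁ : ℂ := (lam : ℂ) * Complex.exp (Complex.I * (β₁ : ℂ)) with hα₁def
  set α₂ : ℂ := (lam : ℂ) * Complex.exp (Complex.I * (β₂ : ℂ)) with hα₂def
  set α : ℂ := (lam : ℂ) * Complex.exp (Complex.I * ((β₁ : ℂ) + (β₂ : ℂ))) with hαdef
  have hαrel : α₁ * α₂ = (lam : ℂ) * α := by
    simp only [hα₁def, hα₂def, hαdef]
    rw [mul_add, Complex.exp_add]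
    ring
  have hlamne : ((lam : ℝ) : ℂ) ≠ 0 := Complex.ofReal_ne_zero.mpr hHA.lam_pos.ne'
  -- the candidate eigenfunction
  set f : M → ℂ := fun x => if 0 < g x then h₁ x * h₂ x / (g x : ℂ) else 0 with hfdef
  have hgm : Measurable g := hHA.g_cont.measurable
  have hset : MeasurableSet {x | 0 < g x} := measurableSet_lt measurable_const hgm
  have hfm : Measurable f :=
    Measurable.ite hset ((hm₁.mul hm₂).div (Complex.measurable_ofReal.comp hgm)) measurable_const
  have hfval : ∀ x, 0 < g x → ‖f x‖ = g x := by
    intro x hx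
    simp only [hfdef, if_pos hx]
    rw [norm_div, norm_mul, hn₁, hn₂, Complex.norm_real, Real.norm_eq_abs, abs_of_pos hx]
    field_simp
  have hfbd : ∀ x, ‖f x‖ ≤ g x := by
    intro x
    by_cases hx : 0 < g x
    · rw [hfval x hx]
    · simp only [hfdef, if_neg hx, norm_zero]; exact hHA.g_nonneg x
  refine ⟨?_, f, ⟨hfm, g x₁, fun x => (hfbd x).trans (hgmax x)⟩, ?_, ?_⟩
  · -- norm of α
    rw [norm_mul, Complex.norm_real, Real.norm_eq_abs, abs_of_pos hHA.lam_pos,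
      Complex.norm_exp]
    simp
  · -- f is not a.e. zero
    intro habs
    have hsubs : {x | 0 < g x} ⊆ {x | ¬ f x = (0 : M → ℂ) x} := by
      intro x hx h0
      have := hfval x hx
      rw [h0] at this
      simp only [Pi.zero_apply, norm_zero] at this
      exact absurd this.symm (ne_of_gt hx)
    exact absurd (measure_mono_null hsubs (Filter.eventuallyEq_iff_exists_mem.mp habs |> fun _ => ae_iff.mp habs)) hμg.ne'
  · -- eigen equation a.e.
    filter_upwards [he₁, he₂] with x hx₁e hx₂e
    have hIg : Real.exp (φ x) * ∫ y, g y ∂(κ x) = lam * g x := by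
      have := congrFun hHA.g_eigen x
      simpa only [PR] using this
    haveI := hfin x
    have hgbd : ∀ y, ‖g y‖ ≤ g x₁ := fun y => by
      rw [Real.norm_eq_abs, abs_of_nonneg (hHA.g_nonneg y)]; exact hgmax y
    have hgint : Integrable g (κ x) := integrable_of_bdd' hgm hgbd
    by_cases hgx : 0 < g x
    · -- equality case for both eigenfunctions
      have key : ∀ (hh : M → ℂ) (αh : ℂ), ‖αh‖ = lam → Measurable hh → (∀ y, ‖hh y‖ = g y) →
          PC φ κ hh x = αh * hh x →
          ∃ u : ℂ, (∀ᵐ y ∂(κ x), hh y = u * (g y : ℂ)) ∧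
            u * ((lam : ℂ) * (g x : ℂ)) = αh * hh x := by
        intro hh αh hαh hhm hhn hheq
        have hint : Integrable hh (κ x) :=
          integrable_of_bdd' hhm (fun y => (hhn y) ▸ hgmax y)
        have hnormeq : ‖∫ y, hh y ∂(κ x)‖ = ∫ y, ‖hh y‖ ∂(κ x) := by
          have e1 : Real.exp (φ x) * ‖∫ y, hh y ∂(κ x)‖ = ‖PC φ κ hh x‖ := by
            simp only [PC, norm_mul, Complex.norm_real, Real.norm_eq_abs,
              abs_of_pos (Real.exp_pos _)]
          have e2 : ‖PC φ κ hh x‖ = lam * g x := by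
            rw [hheq, norm_mul, hαh, hhn x]
          have e3 : ∫ y, ‖hh y‖ ∂(κ x) = ∫ y, g y ∂(κ x) :=
            integral_congr_ae (Filter.Eventually.of_forall fun y => hhn y)
          have e4 : Real.exp (φ x) * ‖∫ y, hh y ∂(κ x)‖
              = Real.exp (φ x) * ∫ y, g y ∂(κ x) := by rw [e1, e2, ← hIg]
          rw [e3]
          exact mul_left_cancel₀ (Real.exp_ne_zero _) e4
        obtain ⟨u, -, hu2⟩ := eq_case' hint hnormeq
        have hu2' : ∀ᵐ y ∂(κ x), hh y = u * (g y : ℂ) := by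
          filter_upwards [hu2] with y hy
          rw [hy, hhn y]
        have hval : u * ((lam : ℂ) * (g x : ℂ)) = αh * hh x := by
          have hPCv : PC φ κ hh x = u * ((lam : ℂ) * (g x : ℂ)) := by
            simp only [PC]
            rw [integral_congr_ae hu2', integral_const_mul,
              show (∫ y, ((g y : ℝ) : ℂ) ∂(κ x)) = ((∫ y, g y ∂(κ x) : ℝ) : ℂ) from integral_ofReal]
            have hcast : ((Real.exp (φ x) : ℝ) : ℂ) * ((∫ y, g y ∂(κ x) : ℝ) : ℂ)
                = (lam : ℂ) * ((g x : ℝ) : ℂ) := by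
              rw [← Complex.ofReal_mul, hIg, Complex.ofReal_mul]
            rw [mul_left_comm, hcast]
          rw [← hPCv, hheq]
        exact ⟨u, hu2', hval⟩
      obtain ⟨u₁, hu₁e, hu₁v⟩ := key h₁ α₁ hα₁ hm₁ hn₁ hx₁e
      obtain ⟨u₂, hu₂e, hu₂v⟩ := key h₂ α₂ hα₂ hm₂ hn₂ hx₂e
      have hgxne : ((g x : ℝ) : ℂ) ≠ 0 := Complex.ofReal_ne_zero.mpr hgx.ne'
      have hfae : ∀ᵐ y ∂(κ x), f y = u₁ * u₂ * (g y : ℂ) := by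
        filter_upwards [hu₁e, hu₂e] with y hy₁ hy₂
        by_cases hgy : 0 < g y
        · have hgyne : ((g y : ℝ) : ℂ) ≠ 0 := Complex.ofReal_ne_zero.mpr hgy.ne'
          simp only [hfdef, if_pos hgy]
          rw [hy₁, hy₂]
          field_simp
        · have hg0 : g y = 0 := le_antisymm (not_lt.mp hgy) (hHA.g_nonneg y)
          simp [hfdef, if_neg hgy, hg0]
      have hPCf : PC φ κ f x = u₁ * u₂ * ((lam : ℂ) * (g x : ℂ)) := by
        simp only [PC]
        rw [integral_congr_ae hfae, integral_const_mul,
          show (∫ y, ((g y : ℝ) : ℂ) ∂(κ x)) = ((∫ y, g y ∂(κ x) : ℝ) : ℂ) from integral_ofReal]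
        have hcast : ((Real.exp (φ x) : ℝ) : ℂ) * ((∫ y, g y ∂(κ x) : ℝ) : ℂ)
            = (lam : ℂ) * ((g x : ℝ) : ℂ) := by
          rw [← Complex.ofReal_mul, hIg, Complex.ofReal_mul]
        rw [mul_left_comm, hcast]
      have hfx : f x = h₁ x * h₂ x / (g x : ℂ) := by simp only [hfdef, if_pos hgx]
      rw [hPCf, hfx]
      have hstep : α * (h₁ x * h₂ x / (g x : ℂ)) = α * h₁ x * h₂ x / (g x : ℂ) := by ring
      rw [hstep, eq_div_iff hgxne]
      have hT : (lam : ℂ) * (u₁ * u₂ * ((lam : ℂ) * (g x : ℂ)) * (g x : ℂ))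
          = (lam : ℂ) * (α * h₁ x * h₂ x) := by
        have hmul : (u₁ * ((lam : ℂ) * (g x : ℂ))) * (u₂ * ((lam : ℂ) * (g x : ℂ)))
            = (α₁ * h₁ x) * (α₂ * h₂ x) := by rw [hu₁v, hu₂v]
        linear_combination hmul + h₁ x * h₂ x * hαrel
      exact mul_left_cancel₀ hlamne hT
    · -- outside the support of g
      have hg0 : g x = 0 := le_antisymm (not_lt.mp hgx) (hHA.g_nonneg x)
      have hgz : ∫ y, g y ∂(κ x) = 0 := by
        rw [hg0, mul_zero] at hIg
        exact (mul_eq_zero.mp hIg).resolve_left (Real.exp_ne_zero _)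
      have hgae : g =ᵐ[κ x] 0 :=
        (integral_eq_zero_iff_of_nonneg_ae
          (Filter.Eventually.of_forall fun y => hHA.g_nonneg y) hgint).mp hgz
      have hfae : f =ᵐ[κ x] 0 := by
        filter_upwards [hgae] with y hy
        simp only [Pi.zero_apply] at hy ⊢
        have := hfbd y
        rw [hy] at this
        exact norm_le_zero_iff.mp this
      have hPCf0 : PC φ κ f x = 0 := by
        simp only [PC]
        rw [integral_eq_zero_of_ae hfae, mul_zero]
      have hfx0 : f x = 0 := by simp only [hfdef, if_neg hgx]
      rw [hPCf0, hfx0, mul_zero]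


end

end QEM
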